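/- In the cone-projection setup, for every w ∈ F and every u in the image ν(G) of G under the projection ν, there exists ε > 0 such that w + ε • u ∈ G. (This is the key perturbation step in the proof of Lemma 3.10: the vectors in ν_F(G) are those orthogonal to F which point into G from any point of F.) -/

import Mathlib

open RealInnerProductSpace

/-- Perturbation step in the proof of Lemma 3.10: for any point `w` of the
face `F` and any vector `u` in the projection `ν(G)` of the open cone `G`,
some small positive multiple of `u` added to `w` lands in `G`. -/
theorem stmt11 (n t k : ℕ) (hk : k ≤ t)
    (g : Fin t → EuclideanSpace ℝ (Fin n))
    (hg : LinearIndependent ℝ g)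
    (W : Submodule ℝ (EuclideanSpace ℝ (Fin n)))
    (hW : W = Submodule.span ℝ {v | ∃ i : Fin t, (i : ℕ) < k ∧ v = g i})
    (ν : EuclideanSpace ℝ (Fin n) → EuclideanSpace ℝ (Fin n))
    (hν : ∀ v, ν v = (Submodule.orthogonalProjectionOnto Wᗮ v : EuclideanSpace ℝ (Fin n)))
    (F G : Set (EuclideanSpace ℝ (Fin n)))
    (hF : F = {x | ∃ α : Fin t → ℝ, (∀ i : Fin t, (i : ℕ) < k → 0 < α i) ∧
      x = ∑ i ∈ Finset.univ.filter (fun i : Fin t => (i : ℕ) < k), α i • g i})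
    (hG : G = {x | ∃ α : Fin t → ℝ, (∀ i, 0 < α i) ∧ x = ∑ i, α i • g i}) :
    ∀ w ∈ F, ∀ u ∈ ν '' G, ∃ ε : ℝ, 0 < ε ∧ w + ε • u ∈ G := by
  classical
  set S : Finset (Fin t) := Finset.univ.filter (fun i : Fin t => (i : ℕ) < k) with hS
  -- the spanning set is a finite set
  have hset : {v : EuclideanSpace ℝ (Fin n) | ∃ i : Fin t, (i : ℕ) < k ∧ v = g i} = ↑(S.image g) := by
    ext v
    simp only [Set.mem_setOf_eq, Finset.coe_image, Set.mem_image, Finset.mem_coe,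
      Finset.mem_filter, Finset.mem_univ, true_and, hS]
    constructor
    · rintro ⟨i, hi, rfl⟩; exact ⟨i, hi, rfl⟩
    · rintro ⟨i, hi, rfl⟩; exact ⟨i, hi, rfl⟩
  have hWfin : FiniteDimensional ℝ W := by
    rw [hW, hset]
    exact FiniteDimensional.span_of_finite ℝ (S.image g).finite_toSet
  rintro w hw u ⟨x, hxG, rfl⟩
  rw [hF] at hw
  obtain ⟨α, hα, hwα⟩ := hw
  rw [hG] at hxG
  obtain ⟨β, hβ, hxβ⟩ := hxG
  -- express the projection of x onto W in terms of the g i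
  have hPmem : (W.orthogonalProjectionOnto x : EuclideanSpace ℝ (Fin n)) ∈
      Submodule.span ℝ ↑(S.image g) := by
    rw [← hset, ← hW]; exact (W.orthogonalProjectionOnto x).2
  obtain ⟨f, -, hf⟩ := Submodule.mem_span_finset.1 hPmem
  have hginj : Set.InjOn g ↑S := hg.injective.injOn
  set γ : Fin t → ℝ := fun i => f (g i) with hγ
  have hP : ∑ i ∈ S, γ i • g i = (W.orthogonalProjectionOnto x : EuclideanSpace ℝ (Fin n)) := by
    rw [← hf, Finset.sum_image (fun a ha b hb h => hginj ha hb h)]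
  have hνx : ν x = x - (W.orthogonalProjectionOnto x : EuclideanSpace ℝ (Fin n)) := by
    rw [hν]; exact congrArg Subtype.val (Submodule.orthogonalProjectionOnto_orthogonal (K := W) x)
  -- choose ε small
  have hev : ∀ᶠ ε in nhdsWithin (0:ℝ) (Set.Ioi 0),
      ∀ i ∈ S, 0 < α i + ε * (β i - γ i) := by
    rw [Filter.eventually_all_finset]
    intro i hi
    have hαi : 0 < α i := hα i (by simpa [hS, Finset.mem_filter] using hi)
    have hc : Filter.Tendsto (fun ε : ℝ => α i + ε * (β i - γ i))
        (nhdsWithin 0 (Set.Ioi 0)) (nhds (α i)) := by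
      have : Filter.Tendsto (fun ε : ℝ => α i + ε * (β i - γ i)) (nhds 0)
          (nhds (α i + 0 * (β i - γ i))) := by
        exact (continuous_const.add (continuous_id.mul continuous_const)).tendsto 0
      simpa using this.mono_left nhdsWithin_le_nhds
    exact hc.eventually (eventually_gt_nhds hαi)
  obtain ⟨ε, hεS, hεpos⟩ := (hev.and self_mem_nhdsWithin).exists
  refine ⟨ε, hεpos, ?_⟩
  rw [hG]
  refine ⟨fun i => ε * β i + (if (i:ℕ) < k then α i - ε * γ i else 0), ?_, ?_⟩
  · intro i
    by_cases hi : (i:ℕ) < k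
    · have := hεS i (by simp [hS, Finset.mem_filter, hi])
      simp only [if_pos hi]
      nlinarith
    · simp only [if_neg hi, add_zero]
      exact mul_pos hεpos (hβ i)
  · have hsplit : ∑ i : Fin t, (ε * β i + (if (i:ℕ) < k then α i - ε * γ i else 0)) • g i
        = ε • x + (w - ε • (W.orthogonalProjectionOnto x : EuclideanSpace ℝ (Fin n))) := by
      have h1 : ∑ i : Fin t, (ε * β i) • g i = ε • x := by
        rw [hxβ, Finset.smul_sum]
        exact Finset.sum_congr rfl fun i _ => (smul_smul ε (β i) (g i)).symm
      have h2 : ∑ i : Fin t, (if (i:ℕ) < k then α i - ε * γ i else 0) • g i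
          = w - ε • (W.orthogonalProjectionOnto x : EuclideanSpace ℝ (Fin n)) := by
        have e1 : ∑ i : Fin t, (if (i:ℕ) < k then α i - ε * γ i else 0) • g i
            = ∑ i : Fin t, (if (i:ℕ) < k then (α i - ε * γ i) • g i else 0) := by
          refine Finset.sum_congr rfl fun i _ => ?_
          split <;> simp
        rw [e1, ← Finset.sum_filter, ← hS, ← hP, hwα, Finset.smul_sum,
          ← Finset.sum_sub_distrib]
        refine Finset.sum_congr rfl fun i _ => ?_
        rw [sub_smul, smul_smul]
      calc ∑ i : Fin t, (ε * β i + (if (i:ℕ) < k then α i - ε * γ i else 0)) • g i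
          = ∑ i : Fin t, ((ε * β i) • g i + (if (i:ℕ) < k then α i - ε * γ i else 0) • g i) := by
            refine Finset.sum_congr rfl fun i _ => add_smul _ _ _
        _ = ε • x + (w - ε • (W.orthogonalProjectionOnto x : EuclideanSpace ℝ (Fin n))) := by
            rw [Finset.sum_add_distrib, h1, h2]
    rw [hsplit, hνx, smul_sub]
    abel
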